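/- Let M, N be positive integers, let P > 0 be a real number, and let (H_k)_{k≥1} be an i.i.d. sequence of random N×M complex matrices on a probability space, where H_1 has standardized independent entries. Then almost surely, as K → ∞, log det(I_M + (P/M) Σ_{k=1}^K H_k* H_k) − M·log K converges to M·log(PN/M). (This is the asymptotic broadcast-cut bound underlying the capacity scaling law of the two-way relay channel.) -/

import Mathlib

open MeasureTheory ProbabilityTheory Matrix Filter

/-- Matrices inherit the product measurable structure from their entries. -/
instance matrixMeasurableSpace {m n α : Type*} [MeasurableSpace α] :
    MeasurableSpace (Matrix m n α) :=
  inferInstanceAs (MeasurableSpace (m → n → α))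

private lemma indepFun_integral_mul_complex {Ω : Type*} [MeasurableSpace Ω] {μ : Measure Ω}
    {X Y : Ω → ℂ} (h : IndepFun X Y μ) (hX : Integrable X μ) (hY : Integrable Y μ) :
    ∫ ω, X ω * Y ω ∂μ = (∫ ω, X ω ∂μ) * ∫ ω, Y ω ∂μ := by
  have hXY : Integrable (fun ω => X ω * Y ω) μ := h.integrable_mul hX hY
  have ha : Integrable (fun ω => (X ω).re) μ := by simpa using hX.re
  have hb : Integrable (fun ω => (X ω).im) μ := by simpa using hX.im
  have hc : Integrable (fun ω => (Y ω).re) μ := by simpa using hY.re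
  have hd : Integrable (fun ω => (Y ω).im) μ := by simpa using hY.im
  have hac : IndepFun (fun ω => (X ω).re) (fun ω => (Y ω).re) μ :=
    h.comp Complex.measurable_re Complex.measurable_re
  have hbd : IndepFun (fun ω => (X ω).im) (fun ω => (Y ω).im) μ :=
    h.comp Complex.measurable_im Complex.measurable_im
  have had : IndepFun (fun ω => (X ω).re) (fun ω => (Y ω).im) μ :=
    h.comp Complex.measurable_re Complex.measurable_im
  have hbc : IndepFun (fun ω => (X ω).im) (fun ω => (Y ω).re) μ :=
    h.comp Complex.measurable_im Complex.measurable_re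
  have e1 : ∫ ω, (X ω).re * (Y ω).re ∂μ = (∫ ω, (X ω).re ∂μ) * ∫ ω, (Y ω).re ∂μ :=
    hac.integral_mul_eq_mul_integral ha.1 hc.1
  have e2 : ∫ ω, (X ω).im * (Y ω).im ∂μ = (∫ ω, (X ω).im ∂μ) * ∫ ω, (Y ω).im ∂μ :=
    hbd.integral_mul_eq_mul_integral hb.1 hd.1
  have e3 : ∫ ω, (X ω).re * (Y ω).im ∂μ = (∫ ω, (X ω).re ∂μ) * ∫ ω, (Y ω).im ∂μ :=
    had.integral_mul_eq_mul_integral ha.1 hd.1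
  have e4 : ∫ ω, (X ω).im * (Y ω).re ∂μ = (∫ ω, (X ω).im ∂μ) * ∫ ω, (Y ω).re ∂μ :=
    hbc.integral_mul_eq_mul_integral hb.1 hc.1
  have p1 : Integrable (fun ω => (X ω).re * (Y ω).re) μ := hac.integrable_mul ha hc
  have p2 : Integrable (fun ω => (X ω).im * (Y ω).im) μ := hbd.integrable_mul hb hd
  have p3 : Integrable (fun ω => (X ω).re * (Y ω).im) μ := had.integrable_mul ha hd
  have p4 : Integrable (fun ω => (X ω).im * (Y ω).re) μ := hbc.integrable_mul hb hc
  have hre : ∀ {f : Ω → ℂ}, Integrable f μ → (∫ ω, f ω ∂μ).re = ∫ ω, (f ω).re ∂μ := by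
    intro f hf
    simpa using (integral_re hf).symm
  have him : ∀ {f : Ω → ℂ}, Integrable f μ → (∫ ω, f ω ∂μ).im = ∫ ω, (f ω).im ∂μ := by
    intro f hf
    simpa using (integral_im hf).symm
  apply Complex.ext
  · rw [Complex.mul_re, hre hXY, hre hX, hre hY, him hX, him hY]
    calc ∫ ω, (X ω * Y ω).re ∂μ
        = ∫ ω, ((X ω).re * (Y ω).re - (X ω).im * (Y ω).im) ∂μ := by
          simp only [Complex.mul_re]
      _ = (∫ ω, (X ω).re * (Y ω).re ∂μ) - ∫ ω, (X ω).im * (Y ω).im ∂μ :=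
          integral_sub p1 p2
      _ = _ := by rw [e1, e2]
  · rw [Complex.mul_im, him hXY, hre hX, hre hY, him hX, him hY]
    calc ∫ ω, (X ω * Y ω).im ∂μ
        = ∫ ω, ((X ω).re * (Y ω).im + (X ω).im * (Y ω).re) ∂μ := by
          simp only [Complex.mul_im]
      _ = (∫ ω, (X ω).re * (Y ω).im ∂μ) + ∫ ω, (X ω).im * (Y ω).re ∂μ :=
          integral_add p3 p4
      _ = _ := by rw [e3, e4]

/-- **Asymptotic broadcast-cut bound.**  If `(H k)` is an i.i.d. sequence of random
`N × M` complex matrices whose common distribution has standardized independent entries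
(mutually independent, mean zero, unit second moment, square integrable), then almost
surely `log det (I_M + (P/M) ∑_{k<K} Hₖᴴ Hₖ) - M log K → M log (P N / M)` as `K → ∞`. -/
theorem broadcast_cut_asymptotic
    {Ω : Type*} [MeasurableSpace Ω] {μ : Measure Ω} [IsProbabilityMeasure μ]
    (M N : ℕ) (hM : 0 < M) (hN : 0 < N) (P : ℝ) (hP : 0 < P)
    (H : ℕ → Ω → Matrix (Fin N) (Fin M) ℂ)
    (hmeas : ∀ k, Measurable (H k))
    (hindep : iIndepFun H μ)
    (hident : ∀ k, IdentDistrib (H k) (H 0) μ μ)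
    (hentindep : iIndepFun
      (fun (p : Fin N × Fin M) (ω : Ω) => H 0 ω p.1 p.2) μ)
    (hL2 : ∀ (i : Fin N) (j : Fin M), MemLp (fun ω => H 0 ω i j) 2 μ)
    (hmean : ∀ (i : Fin N) (j : Fin M), ∫ ω, H 0 ω i j ∂μ = 0)
    (hvar : ∀ (i : Fin N) (j : Fin M), ∫ ω, ‖H 0 ω i j‖ ^ 2 ∂μ = 1) :
    ∀ᵐ ω ∂μ, Tendsto (fun K : ℕ =>
        Real.log (((1 : Matrix (Fin M) (Fin M) ℂ)
            + ((P / M : ℝ) : ℂ) • ∑ k ∈ Finset.range K, (H k ω)ᴴ * H k ω).det.re)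
          - M * Real.log K)
      atTop (nhds (M * Real.log (P * N / M))) := by
  classical
  have hmeasent : ∀ (k : ℕ) (n : Fin N) (j : Fin M), Measurable (fun ω => H k ω n j) :=
    fun k n j => (measurable_pi_apply j).comp ((measurable_pi_apply n).comp (hmeas k))
  have hstarC : Measurable (star : ℂ → ℂ) := continuous_star.measurable
  have hfmeas : ∀ (i j : Fin M),
      Measurable (fun A : Matrix (Fin N) (Fin M) ℂ => (Aᴴ * A) i j) := by
    intro i j
    simp only [Matrix.mul_apply, Matrix.conjTranspose_apply]
    exact Finset.measurable_sum _ fun n _ =>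
      ((hstarC.comp ((measurable_pi_apply i).comp (measurable_pi_apply n))).mul
        ((measurable_pi_apply j).comp (measurable_pi_apply n)))
  -- square-integrability facts
  have hstarmem : ∀ (n : Fin N) (i : Fin M),
      MemLp (fun ω => star (H 0 ω n i)) 2 μ := by
    intro n i
    refine MemLp.of_le (hL2 n i) (hstarC.comp (hmeasent 0 n i)).aestronglyMeasurable
      (Filter.Eventually.of_forall fun ω => ?_)
    simp
  have hterm : ∀ (n : Fin N) (i j : Fin M),
      Integrable (fun ω => star (H 0 ω n i) * H 0 ω n j) μ := by
    intro n i j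
    have h2 := memLp_one_iff_integrable.mp
      ((hL2 n j).smul (hstarmem n i) (p := 2) (q := 2) (r := 1))
    exact h2
  -- the strong law of large numbers applied entrywise
  have key : ∀ (i j : Fin M), ∀ᵐ ω ∂μ, Tendsto
      (fun K : ℕ => (K : ℝ)⁻¹ • ∑ k ∈ Finset.range K, ((H k ω)ᴴ * H k ω) i j)
      atTop (nhds (if i = j then (N : ℂ) else 0)) := by
    intro i j
    have hrw : ∀ (A : Matrix (Fin N) (Fin M) ℂ),
        (Aᴴ * A) i j = ∑ n, star (A n i) * A n j := by
      intro A
      simp [Matrix.mul_apply, Matrix.conjTranspose_apply]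
    have hint : Integrable (fun ω => ((H 0 ω)ᴴ * H 0 ω) i j) μ := by
      simp only [hrw]
      exact integrable_finset_sum _ fun n _ => hterm n i j
    have hexp : (∫ ω, ((H 0 ω)ᴴ * H 0 ω) i j ∂μ) = (if i = j then (N : ℂ) else 0) := by
      simp only [hrw]
      rw [integral_finset_sum _ fun n _ => hterm n i j]
      by_cases hij : i = j
      · subst hij
        have hone : ∀ n : Fin N, ∫ ω, star (H 0 ω n i) * H 0 ω n i ∂μ = 1 := by
          intro n
          have hz : ∀ z : ℂ, star z * z = ((‖z‖ ^ 2 : ℝ) : ℂ) := by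
            intro z
            rw [Complex.star_def, mul_comm, Complex.mul_conj]
            norm_cast
            rw [Complex.normSq_eq_norm_sq]
          simp only [hz]
          rw [show (∫ ω, ((‖H 0 ω n i‖ ^ 2 : ℝ) : ℂ) ∂μ)
              = ((∫ ω, ‖H 0 ω n i‖ ^ 2 ∂μ : ℝ) : ℂ) from integral_ofReal,
            hvar n i, Complex.ofReal_one]
        simp only [hone]
        simp [Finset.card_univ]
      · have hzero : ∀ n : Fin N, ∫ ω, star (H 0 ω n i) * H 0 ω n j ∂μ = 0 := by
          intro n
          have hne : ((n, i) : Fin N × Fin M) ≠ (n, j) := by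
            simp [Prod.ext_iff, hij]
          have hind : IndepFun (fun ω => H 0 ω n i) (fun ω => H 0 ω n j) μ :=
            hentindep.indepFun hne
          have hind2 : IndepFun (fun ω => star (H 0 ω n i)) (fun ω => H 0 ω n j) μ :=
            hind.comp hstarC measurable_id
          rw [indepFun_integral_mul_complex hind2
            ((hstarmem n i).integrable one_le_two) ((hL2 n j).integrable one_le_two)]
          have : ∫ ω, star (H 0 ω n i) ∂μ = 0 := by
            simp only [Complex.star_def]
            rw [integral_conj, hmean n i, map_zero]
          rw [this, zero_mul]
        simp only [hzero]
        simp [hij]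
    have hpind : Pairwise (Function.onFun (IndepFun · · μ)
        (fun k ω => ((H k ω)ᴴ * H k ω) i j)) := by
      intro k l hkl
      exact (hindep.comp (fun _ A => (Aᴴ * A) i j) (fun _ => hfmeas i j)).indepFun hkl
    have hpid : ∀ k, IdentDistrib (fun ω => ((H k ω)ᴴ * H k ω) i j)
        (fun ω => ((H 0 ω)ᴴ * H 0 ω) i j) μ μ :=
      fun k => (hident k).comp (hfmeas i j)
    have hsl := strong_law_ae (μ := μ)
      (fun k ω => ((H k ω)ᴴ * H k ω) i j) hint hpind hpid
    rw [show (μ[fun ω => ((H 0 ω)ᴴ * H 0 ω) i j]) = (if i = j then (N : ℂ) else 0) from hexp]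
      at hsl
    exact hsl
  have hae : ∀ᵐ ω ∂μ, ∀ (i j : Fin M), Tendsto
      (fun K : ℕ => (K : ℝ)⁻¹ • ∑ k ∈ Finset.range K, ((H k ω)ᴴ * H k ω) i j)
      atTop (nhds (if i = j then (N : ℂ) else 0)) := by
    rw [ae_all_iff]
    intro i
    rw [ae_all_iff]
    intro j
    exact key i j
  filter_upwards [hae] with ω hω
  set r : ℝ := P * N / M with hrdef
  have hr : 0 < r := by positivity
  set c : ℂ := ((P / M : ℝ) : ℂ) with hcdef
  set S : ℕ → Matrix (Fin M) (Fin M) ℂ :=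
    fun K => ∑ k ∈ Finset.range K, (H k ω)ᴴ * H k ω with hSdef
  set A : ℕ → Matrix (Fin M) (Fin M) ℂ :=
    fun K => (1 : Matrix (Fin M) (Fin M) ℂ) + c • S K with hAdef
  set B : ℕ → Matrix (Fin M) (Fin M) ℂ := fun K => ((K : ℂ))⁻¹ • A K with hBdef
  have hinv0 : Tendsto (fun K : ℕ => ((K : ℂ))⁻¹) atTop (nhds 0) := by
    have h1 : Tendsto (fun K : ℕ => (((K : ℝ)⁻¹ : ℝ) : ℂ)) atTop (nhds ((0 : ℝ) : ℂ)) :=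
      (Complex.continuous_ofReal.tendsto 0).comp tendsto_inv_atTop_nhds_zero_nat
    simpa [Complex.ofReal_inv] using h1
  -- convergence of B entrywise
  have hBtend : Tendsto B atTop (nhds (((r : ℝ) : ℂ) • (1 : Matrix (Fin M) (Fin M) ℂ))) := by
    refine tendsto_pi_nhds.mpr fun i => ?_
    refine tendsto_pi_nhds.mpr fun j => ?_
    have hentry : ∀ K : ℕ, B K i j
        = ((K : ℂ))⁻¹ * ((1 : Matrix (Fin M) (Fin M) ℂ) i j)
          + c * ((K : ℝ)⁻¹ • ∑ k ∈ Finset.range K, ((H k ω)ᴴ * H k ω) i j) := by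
      intro K
      have hsum : S K i j = ∑ k ∈ Finset.range K, ((H k ω)ᴴ * H k ω) i j := by
        simp [hSdef, Matrix.sum_apply]
      simp only [hBdef, hAdef, Matrix.smul_apply, Matrix.add_apply, smul_eq_mul, hsum,
        Complex.real_smul, Complex.ofReal_inv, Complex.ofReal_natCast]
      ring
    have hlim : Tendsto (fun K : ℕ =>
        ((K : ℂ))⁻¹ * ((1 : Matrix (Fin M) (Fin M) ℂ) i j)
          + c * ((K : ℝ)⁻¹ • ∑ k ∈ Finset.range K, ((H k ω)ᴴ * H k ω) i j))
        atTop (nhds (0 * ((1 : Matrix (Fin M) (Fin M) ℂ) i j)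
          + c * (if i = j then (N : ℂ) else 0))) :=
      ((hinv0.mul tendsto_const_nhds).add (tendsto_const_nhds.mul (hω i j)))
    have heq : (((r : ℝ) : ℂ) • (1 : Matrix (Fin M) (Fin M) ℂ)) i j
        = 0 * ((1 : Matrix (Fin M) (Fin M) ℂ) i j) + c * (if i = j then (N : ℂ) else 0) := by
      by_cases hij : i = j
      · subst hij
        simp only [Matrix.smul_apply, Matrix.one_apply_eq, smul_eq_mul, mul_one, if_pos rfl,
          zero_mul, zero_add, hcdef, hrdef]
        push_cast [ne_of_gt hM]
        field_simp
      · simp [Matrix.one_apply_ne hij, hij]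
    rw [heq]
    exact Tendsto.congr (fun K => (hentry K).symm) hlim
  -- convergence of the renormalized determinant
  have hdetcont : Continuous (fun X : Matrix (Fin M) (Fin M) ℂ => X.det) :=
    continuous_id.matrix_det
  have hdet : Tendsto (fun K => (B K).det) atTop (nhds (((r : ℝ) : ℂ) ^ M)) := by
    have h1 : Tendsto (fun K => (B K).det) atTop
        (nhds ((((r : ℝ) : ℂ) • (1 : Matrix (Fin M) (Fin M) ℂ)).det)) :=
      (hdetcont.tendsto _).comp hBtend
    simpa [Matrix.det_smul, Fintype.card_fin] using h1
  have hdetre : Tendsto (fun K => (B K).det.re) atTop (nhds (r ^ M)) := by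
    have h1 : Tendsto (fun K => (B K).det.re) atTop (nhds ((((r : ℝ) : ℂ) ^ M).re)) :=
      (Complex.continuous_re.tendsto _).comp hdet
    simpa [← Complex.ofReal_pow] using h1
  have hrM : (0 : ℝ) < r ^ M := by positivity
  have hpos : ∀ᶠ K : ℕ in atTop, 0 < (B K).det.re :=
    hdetre.eventually (eventually_gt_nhds hrM)
  have hlog : Tendsto (fun K => Real.log ((B K).det.re)) atTop
      (nhds (M * Real.log r)) := by
    have h1 : Tendsto (fun K => Real.log ((B K).det.re)) atTop (nhds (Real.log (r ^ M))) :=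
      (Real.continuousAt_log (ne_of_gt hrM)).tendsto.comp hdetre
    simpa [Real.log_pow] using h1
  refine Tendsto.congr' ?_ hlog
  filter_upwards [hpos, eventually_ge_atTop 1] with K hKpos hK1
  have hKR : (1 : ℝ) ≤ (K : ℝ) := by exact_mod_cast hK1
  have hKR0 : (0 : ℝ) < (K : ℝ) := lt_of_lt_of_le one_pos hKR
  have hBdetre : (B K).det.re = ((K : ℝ)⁻¹) ^ M * (A K).det.re := by
    have h1 : (B K).det = ((K : ℂ))⁻¹ ^ M * (A K).det := by
      rw [hBdef]
      simp [Matrix.det_smul, Fintype.card_fin]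
    rw [h1, show ((K : ℂ))⁻¹ ^ M = ((((K : ℝ)⁻¹ : ℝ) ^ M : ℝ) : ℂ) by push_cast; ring]
    exact Complex.re_ofReal_mul _ _
  have hKpow : (0 : ℝ) < ((K : ℝ)⁻¹) ^ M := by positivity
  have hApos : 0 < (A K).det.re := by
    rw [hBdetre] at hKpos
    nlinarith
  rw [hBdetre, Real.log_mul (ne_of_gt hKpow) (ne_of_gt hApos), Real.log_pow, Real.log_inv]
  ring
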